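/- Let A ∈ C^{n×m} and D ∈ C^{m×n}. Then A is right invertible along D if and only if A is left invertible along D. -/

import Mathlib

open Matrix

private lemma mvl_inj {p q : ℕ} {P Q : Matrix (Fin p) (Fin q) ℂ}
    (h : P.mulVecLin = Q.mulVecLin) : P = Q := by
  ext i j
  have := congrArg (fun f : (Fin q → ℂ) →ₗ[ℂ] (Fin p → ℂ) => f (Pi.single j 1) i) h
  simpa [Matrix.mulVecLin_apply, Matrix.mulVec, dotProduct, Pi.single_apply,
    Finset.sum_ite_eq'] using this

private lemma factor_right {p q r : ℕ} (M : Matrix (Fin p) (Fin q) ℂ)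
    (N : Matrix (Fin p) (Fin r) ℂ)
    (h : LinearMap.range N.mulVecLin ≤ LinearMap.range M.mulVecLin) :
    ∃ X : Matrix (Fin q) (Fin r) ℂ, M * X = N := by
  obtain ⟨s, hs⟩ := M.mulVecLin.rangeRestrict.exists_rightInverse_of_surjective
    M.mulVecLin.range_rangeRestrict
  let g : (Fin r → ℂ) →ₗ[ℂ] (Fin q → ℂ) :=
    s ∘ₗ (N.mulVecLin.codRestrict (LinearMap.range M.mulVecLin)
      (fun v => h (LinearMap.mem_range_self _ v)))
  have hgm : (LinearMap.toMatrix' g).mulVecLin = g := by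
    rw [← Matrix.toLin'_apply', Matrix.toLin'_toMatrix']
  refine ⟨LinearMap.toMatrix' g, mvl_inj ?_⟩
  rw [Matrix.mulVecLin_mul, hgm]
  refine LinearMap.ext fun v => ?_
  have h4 := congrArg Subtype.val (LinearMap.ext_iff.mp hs
    (⟨N.mulVecLin v, h (LinearMap.mem_range_self _ v)⟩ : ↥(LinearMap.range M.mulVecLin)))
  simp [g] at h4 ⊢
  exact h4

private lemma factor_left {p q r : ℕ} (C : Matrix (Fin p) (Fin q) ℂ)
    (D : Matrix (Fin r) (Fin q) ℂ)
    (h : LinearMap.ker D.mulVecLin ≤ LinearMap.ker C.mulVecLin) :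
    ∃ Z : Matrix (Fin p) (Fin r) ℂ, C = Z * D := by
  let φ := (LinearMap.ker D.mulVecLin).liftQ C.mulVecLin h
  let ψ : ↥(LinearMap.range D.mulVecLin) →ₗ[ℂ] (Fin p → ℂ) :=
    φ ∘ₗ (D.mulVecLin.quotKerEquivRange.symm : _ ≃ₗ[ℂ] _).toLinearMap
  obtain ⟨g, hg⟩ := ψ.exists_extend
  have hgm : (LinearMap.toMatrix' g).mulVecLin = g := by
    rw [← Matrix.toLin'_apply', Matrix.toLin'_toMatrix']
  refine ⟨LinearMap.toMatrix' g, mvl_inj ?_⟩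
  rw [Matrix.mulVecLin_mul, hgm]
  refine LinearMap.ext fun v => ?_
  have hmem : D.mulVecLin v ∈ LinearMap.range D.mulVecLin := LinearMap.mem_range_self _ v
  have h1 : g (D.mulVecLin v) = ψ ⟨D.mulVecLin v, hmem⟩ := by
    simpa using LinearMap.ext_iff.mp hg ⟨D.mulVecLin v, hmem⟩
  have h2 : D.mulVecLin.quotKerEquivRange.symm ⟨D.mulVecLin v, hmem⟩
      = (LinearMap.ker D.mulVecLin).mkQ v :=
    D.mulVecLin.quotKerEquivRange_symm_apply_image v hmem
  have h3 : ψ ⟨D.mulVecLin v, hmem⟩ = C.mulVecLin v := by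
    simp only [ψ, φ, LinearMap.comp_apply, LinearEquiv.coe_coe, h2]
    rw [Submodule.mkQ_apply, Submodule.liftQ_apply]
  rw [LinearMap.comp_apply, h1, h3]

theorem stmt8 (n m : ℕ) (A : Matrix (Fin n) (Fin m) ℂ) (D : Matrix (Fin m) (Fin n) ℂ) :
    (∃ B : Matrix (Fin m) (Fin n) ℂ, D * A * B = D ∧
      LinearMap.range B.mulVecLin ≤ LinearMap.range D.mulVecLin) ↔
    (∃ C : Matrix (Fin m) (Fin n) ℂ, C * A * D = D ∧
      LinearMap.ker D.mulVecLin ≤ LinearMap.ker C.mulVecLin) := by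
  set M : Matrix (Fin m) (Fin n) ℂ := D * A * D with hM
  have hrangeM : LinearMap.range M.mulVecLin ≤ LinearMap.range D.mulVecLin := by
    intro x hx
    obtain ⟨v, hv⟩ := hx
    exact ⟨(A * D).mulVec v, by
      rw [← hv]
      simp [hM, Matrix.mulVecLin_apply, Matrix.mulVec_mulVec, Matrix.mul_assoc]⟩
  have hkerM : LinearMap.ker D.mulVecLin ≤ LinearMap.ker M.mulVecLin := by
    intro v hv
    simp only [LinearMap.mem_ker, Matrix.mulVecLin_apply] at hv ⊢
    rw [hM, ← Matrix.mulVec_mulVec, hv, Matrix.mulVec_zero]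
  constructor
  · rintro ⟨B, hB, hBr⟩
    obtain ⟨X, hX⟩ := factor_right D B hBr
    have hMX : M * X = D := by rw [hM, Matrix.mul_assoc (D * A) D X, hX, hB]
    have hrDM : LinearMap.range D.mulVecLin ≤ LinearMap.range M.mulVecLin := by
      intro x hx
      obtain ⟨v, hv⟩ := hx
      exact ⟨X.mulVec v, by
        rw [← hv, ← hMX]; simp [Matrix.mulVecLin_apply, Matrix.mulVec_mulVec]⟩
    have hreq : LinearMap.range M.mulVecLin = LinearMap.range D.mulVecLin :=
      le_antisymm hrangeM hrDM
    have hfk : Module.finrank ℂ (LinearMap.ker M.mulVecLin)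
        = Module.finrank ℂ (LinearMap.ker D.mulVecLin) := by
      have h1 := M.mulVecLin.finrank_range_add_finrank_ker
      have h2 := D.mulVecLin.finrank_range_add_finrank_ker
      rw [hreq] at h1
      omega
    have hkeq : LinearMap.ker M.mulVecLin = LinearMap.ker D.mulVecLin :=
      (Submodule.eq_of_le_of_finrank_le hkerM hfk.le).symm
    obtain ⟨Z, hZ⟩ := factor_left D M hkeq.le
    refine ⟨Z * D, ?_, ?_⟩
    · rw [Matrix.mul_assoc Z D A, Matrix.mul_assoc Z (D * A) D, ← hM]
      exact hZ.symm
    · intro v hv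
      simp only [LinearMap.mem_ker, Matrix.mulVecLin_apply] at hv ⊢
      rw [← Matrix.mulVec_mulVec, hv, Matrix.mulVec_zero]
  · rintro ⟨C, hC, hCk⟩
    obtain ⟨Z, hZ⟩ := factor_left C D hCk
    have hZM : Z * M = D := by
      rw [hM, ← Matrix.mul_assoc Z (D * A) D, ← Matrix.mul_assoc Z D A, ← hZ, hC]
    have hkMD : LinearMap.ker M.mulVecLin ≤ LinearMap.ker D.mulVecLin := by
      intro v hv
      simp only [LinearMap.mem_ker, Matrix.mulVecLin_apply] at hv ⊢
      rw [← hZM, ← Matrix.mulVec_mulVec, hv, Matrix.mulVec_zero]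
    have hkeq : LinearMap.ker M.mulVecLin = LinearMap.ker D.mulVecLin :=
      le_antisymm hkMD hkerM
    have hfr : Module.finrank ℂ (LinearMap.range D.mulVecLin)
        ≤ Module.finrank ℂ (LinearMap.range M.mulVecLin) := by
      have h1 := M.mulVecLin.finrank_range_add_finrank_ker
      have h2 := D.mulVecLin.finrank_range_add_finrank_ker
      rw [hkeq] at h1
      omega
    have hreq : LinearMap.range M.mulVecLin = LinearMap.range D.mulVecLin :=
      Submodule.eq_of_le_of_finrank_le hrangeM hfr
    obtain ⟨X, hX⟩ := factor_right M D hreq.ge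
    refine ⟨D * X, ?_, ?_⟩
    · rw [← Matrix.mul_assoc, ← hM]
      exact hX
    · intro x hx
      obtain ⟨v, hv⟩ := hx
      exact ⟨X.mulVec v, by rw [← hv]; simp [Matrix.mulVecLin_apply, Matrix.mulVec_mulVec]⟩
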